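/- If (x_n) is a sequence of positive reals decreasing to zero, then the random dive MH kernels K(x_n,·) converge weakly to the point mass δ₀ at zero; i.e., for every y < 0, K(x_n,(-∞,y]) → 0 and for every y > 0, K(x_n,(y,∞)) → 0 as n → ∞. -/

import Mathlib

open MeasureTheory Set Filter

/-- The random dive MH proposal kernel density. -/
noncomputable def rdmhProposal (g : ℝ → ℝ) (x y : ℝ) : ℝ :=
  if |y| < |x| then (1 / 2) * g (y / x) * (1 / |x|)
  else if |x| < |y| then (1 / 2) * g (x / y) * (|x| / y ^ 2)
  else 0

/-- The Metropolis–Hastings acceptance probability for the RDMH proposal. -/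
noncomputable def rdmhAccept (g π : ℝ → ℝ) (x y : ℝ) : ℝ :=
  min (π y * rdmhProposal g y x / (π x * rdmhProposal g x y)) 1

/-- The random dive MH transition kernel: continuous (accepted-move) part plus
the rejection mass at the current state. -/
noncomputable def rdmhKernel (g π : ℝ → ℝ) (x : ℝ) (A : Set ℝ) : ℝ :=
  (∫ y in A, rdmhProposal g x y * rdmhAccept g π x y) +
    (1 - ∫ y in ({0}ᶜ : Set ℝ), rdmhProposal g x y * rdmhAccept g π x y) *
      Set.indicator A (fun _ => (1 : ℝ)) x

lemma rdmhProposal_nonneg {g : ℝ → ℝ} (hg : ∀ ε, 0 ≤ g ε) (x y : ℝ) :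
    0 ≤ rdmhProposal g x y := by
  unfold rdmhProposal
  split_ifs with h1 h2
  · exact mul_nonneg (mul_nonneg (by norm_num) (hg _)) (by positivity)
  · exact mul_nonneg (mul_nonneg (by norm_num) (hg _))
      (div_nonneg (abs_nonneg _) (sq_nonneg _))
  · exact le_refl 0

lemma rdmhAccept_nonneg {g π : ℝ → ℝ} (hg : ∀ ε, 0 ≤ g ε) (hπ : ∀ z, 0 < π z)
    (x y : ℝ) : 0 ≤ rdmhAccept g π x y :=
  le_min (div_nonneg (mul_nonneg (hπ y).le (rdmhProposal_nonneg hg y x))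
    (mul_nonneg (hπ x).le (rdmhProposal_nonneg hg x y))) zero_le_one

lemma rdmhAccept_le_one (g π : ℝ → ℝ) (x y : ℝ) : rdmhAccept g π x y ≤ 1 :=
  min_le_right _ _

/-- `g` is globally integrable since it vanishes off `Ioo (-1) 1 \ {0}`. -/
lemma g_integrable {g : ℝ → ℝ}
    (hg_supp : ∀ ε, ε ∉ Ioo (-1 : ℝ) 1 \ {0} → g ε = 0)
    (hg_int : IntegrableOn g (Ioo (-1 : ℝ) 1 \ {0})) : Integrable g := by
  have hmeas : MeasurableSet (Ioo (-1 : ℝ) 1 \ {0}) :=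
    measurableSet_Ioo.diff (measurableSet_singleton 0)
  have : g = (Ioo (-1 : ℝ) 1 \ {0}).indicator g := by
    funext ε
    by_cases h : ε ∈ Ioo (-1 : ℝ) 1 \ {0}
    · rw [indicator_of_mem h]
    · rw [indicator_of_notMem h, hg_supp ε h]
  rw [this]
  rwa [integrable_indicator_iff hmeas]

/-- If every point eventually escapes the sets `S n`, the integrals over `S n` tend to `0`. -/
lemma tendsto_setIntegral_zero {G : ℝ → ℝ} (hG : Integrable G) (S : ℕ → Set ℝ)
    (hS : ∀ n, MeasurableSet (S n)) (h : ∀ ε : ℝ, ∀ᶠ n in atTop, ε ∉ S n) :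
    Tendsto (fun n => ∫ ε in S n, G ε) atTop (nhds 0) := by
  have key : (fun n => ∫ ε in S n, G ε) = fun n => ∫ ε, (S n).indicator G ε := by
    funext n; exact (integral_indicator (hS n)).symm
  rw [key]
  have h0 : (0 : ℝ) = ∫ ε : ℝ, (0 : ℝ) := by simp
  rw [h0]
  apply tendsto_integral_of_dominated_convergence (fun ε => |G ε|)
  · intro n; exact hG.1.indicator (hS n)
  · exact hG.abs
  · intro n
    filter_upwards with ε
    rw [Real.norm_eq_abs]
    exact norm_indicator_le_norm_self G ε
  · filter_upwards with ε
    apply Tendsto.congr' _ tendsto_const_nhds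
    filter_upwards [h ε] with n hn
    rw [indicator_of_notMem hn]

lemma div_le_div_of_neg {x y z : ℝ} (hx : 0 < x) (hzy : z ≤ y) (hy : y < 0) :
    x / y ≤ x / z := by
  have hz : z < 0 := lt_of_le_of_lt hzy hy
  have hyz : 0 < y * z := mul_pos_of_neg_of_neg hy hz
  have key : x / y - x / z = x * (z - y) / (y * z) := by
    field_simp [hy.ne, hz.ne]
  have h1 : x * (z - y) ≤ 0 := mul_nonpos_of_nonneg_of_nonpos hx.le (by linarith)
  have h2 : x * (z - y) / (y * z) ≤ 0 := div_nonpos_of_nonpos_of_nonneg h1 hyz.le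
  linarith [key ▸ h2]

/-- The key bound: the integral of the sub-probability kernel density over a set `s`
bounded away from `0` is at most half of the integral of `g` over a set containing
the image of `s` under `z ↦ x / z`. -/
lemma key_bound {g π : ℝ → ℝ} (hg_nonneg : ∀ ε, 0 ≤ g ε) (hπ : ∀ z, 0 < π z)
    (hgint : Integrable g) {x : ℝ} (hx : 0 < x) {s T : Set ℝ}
    (hs : MeasurableSet s) (hT : MeasurableSet T)
    (hsz : ∀ z ∈ s, x < |z|) (him : ∀ z ∈ s, x / z ∈ T) :
    ∫ z in s, rdmhProposal g x z * rdmhAccept g π x z ≤ (1 / 2) * ∫ ε in T, g ε := by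
  set f : ℝ → ℝ := fun z => x / z with hf_def
  set f' : ℝ → ℝ := fun z => -(x / z ^ 2) with hf'_def
  set G : ℝ → ℝ := fun ε => (1 / 2) * g ε with hG_def
  have hGint : Integrable G := hgint.const_mul _
  have hz0 : ∀ z ∈ s, z ≠ 0 := by
    intro z hz h0
    have := hsz z hz
    rw [h0, abs_zero] at this
    exact absurd this (not_lt.2 hx.le)
  have hderiv : ∀ z ∈ s, HasDerivWithinAt f (f' z) s z := by
    intro z hz
    have h := ((hasDerivAt_inv (hz0 z hz)).const_mul x).hasDerivWithinAt (s := s)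
    convert h using 1
    · rfl
    · rfl
    · funext y; simp only [hf_def, div_eq_mul_inv]
    have hz2 : (z : ℝ) ^ 2 ≠ 0 := pow_ne_zero _ (hz0 z hz)
    simp only [hf'_def]
    field_simp
  have hinj : InjOn f s := by
    intro z1 h1 z2 h2 h
    have hz1 := hz0 z1 h1
    have hz2 := hz0 z2 h2
    simp only [hf_def] at h
    field_simp at h
    exact h.symm
  -- the proposal equals |f'| • (G ∘ f) on s
  have heq : EqOn (fun z => rdmhProposal g x z) (fun z => |f' z| • G (f z)) s := by
    intro z hz
    have hzx := hsz z hz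
    have hxz : |x| < |z| := by rwa [abs_of_pos hx]
    have hzne : z ≠ 0 := by
      intro h
      rw [h, abs_zero] at hzx
      linarith
    have hz2 : (0 : ℝ) < z ^ 2 := lt_of_le_of_ne (sq_nonneg z) (Ne.symm (pow_ne_zero 2 hzne))
    have hbranch : rdmhProposal g x z = 1 / 2 * g (x / z) * (x / z ^ 2) := by
      rw [rdmhProposal, if_neg (not_lt.2 hxz.le), if_pos hxz, abs_of_pos hx]
    show rdmhProposal g x z = |f' z| • G (f z)
    rw [hbranch]
    simp only [hf_def, hf'_def, hG_def, abs_neg, smul_eq_mul,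
      abs_of_nonneg (div_nonneg hx.le hz2.le)]
    ring
  have hprop_int : IntegrableOn (fun z => rdmhProposal g x z) s := by
    have h1 : IntegrableOn G (f '' s) := hGint.integrableOn
    have h2 : IntegrableOn (fun z => |f' z| • G (f z)) s :=
      (integrableOn_image_iff_integrableOn_abs_deriv_smul hs hderiv hinj G).mp h1
    exact h2.congr_fun (fun z hz => (heq hz).symm) hs
  calc ∫ z in s, rdmhProposal g x z * rdmhAccept g π x z
      ≤ ∫ z in s, rdmhProposal g x z := by
        apply integral_mono_of_nonneg
        · filter_upwards with z
          exact mul_nonneg (rdmhProposal_nonneg hg_nonneg _ _)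
            (rdmhAccept_nonneg hg_nonneg hπ _ _)
        · exact hprop_int
        · filter_upwards with z
          exact mul_le_of_le_one_right (rdmhProposal_nonneg hg_nonneg _ _)
            (rdmhAccept_le_one _ _ _ _)
    _ = ∫ z in s, |f' z| • G (f z) := setIntegral_congr_fun hs heq
    _ = ∫ ε in f '' s, G ε := (integral_image_eq_integral_abs_deriv_smul hs hderiv hinj G).symm
    _ ≤ ∫ ε in T, G ε := by
        apply setIntegral_mono_set hGint.integrableOn
        · filter_upwards with ε
          exact mul_nonneg (by norm_num) (hg_nonneg ε)
        · exact HasSubset.Subset.eventuallyLE (by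
            rintro ε ⟨z, hz, rfl⟩
            exact him z hz)
    _ = (1 / 2) * ∫ ε in T, g ε := integral_const_mul _ _

theorem stmt_8 (g : ℝ → ℝ) (hg_meas : Measurable g) (hg_nonneg : ∀ ε, 0 ≤ g ε)
    (hg_supp : ∀ ε, ε ∉ Ioo (-1 : ℝ) 1 \ {0} → g ε = 0)
    (hg_int : IntegrableOn g (Ioo (-1 : ℝ) 1 \ {0}))
    (hg_one : ∫ ε in Ioo (-1 : ℝ) 1 \ {0}, g ε = 1)
    (π : ℝ → ℝ) (hπ_pos : ∀ z, 0 < π z)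
    (x : ℕ → ℝ) (hx_pos : ∀ n, 0 < x n) (hx_anti : StrictAnti x)
    (hx_lim : Tendsto x atTop (nhds 0)) :
    (∀ y : ℝ, y < 0 →
      Tendsto (fun n => rdmhKernel g π (x n) (Iic y)) atTop (nhds 0)) ∧
    (∀ y : ℝ, 0 < y →
      Tendsto (fun n => rdmhKernel g π (x n) (Ioi y)) atTop (nhds 0)) := by
  have hgint : Integrable g := g_integrable hg_supp hg_int
  constructor
  · -- negative side
    intro y hy
    have hxy : ∀ᶠ n in atTop, x n < -y := hx_lim.eventually_lt_const (by linarith)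
    have hK : ∀ n, rdmhKernel g π (x n) (Iic y)
        = ∫ z in Iic y, rdmhProposal g (x n) z * rdmhAccept g π (x n) z := by
      intro n
      unfold rdmhKernel
      rw [indicator_of_notMem (by simp only [mem_Iic, not_le]; linarith [hx_pos n]),
        mul_zero, add_zero]
    -- the bounding sequence
    have hdiv : Tendsto (fun n => x n / y) atTop (nhds 0) := by
      have := hx_lim.div_const y
      simpa using this
    have hbnd : Tendsto (fun n => (1 / 2) * ∫ ε in Ico (x n / y) 0, g ε) atTop (nhds 0) := by
      have h0 : Tendsto (fun n => ∫ ε in Ico (x n / y) 0, g ε) atTop (nhds 0) := by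
        apply tendsto_setIntegral_zero hgint _ (fun n => measurableSet_Ico)
        intro ε
        rcases lt_or_ge ε 0 with hε | hε
        · filter_upwards [hdiv.eventually_const_lt hε] with n hn
          intro hmem
          exact absurd hn (not_lt.2 hmem.1)
        · filter_upwards with n hmem
          exact absurd hmem.2 (not_lt.2 hε)
      simpa using h0.const_mul (1 / 2 : ℝ)
    apply tendsto_of_tendsto_of_tendsto_of_le_of_le' tendsto_const_nhds hbnd
    · filter_upwards with n
      rw [hK n]
      apply setIntegral_nonneg measurableSet_Iic
      intro z _
      exact mul_nonneg (rdmhProposal_nonneg hg_nonneg _ _)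
        (rdmhAccept_nonneg hg_nonneg hπ_pos _ _)
    · filter_upwards [hxy] with n hn
      rw [hK n]
      apply key_bound hg_nonneg hπ_pos hgint (hx_pos n) measurableSet_Iic measurableSet_Ico
      · intro z hz
        have hz' : z ≤ y := hz
        rw [abs_of_neg (by linarith)]
        linarith
      · intro z hz
        have hz' : z ≤ y := hz
        have hzneg : z < 0 := by linarith
        constructor
        · exact div_le_div_of_neg (hx_pos n) hz' hy
        · exact div_neg_of_pos_of_neg (hx_pos n) hzneg
  · -- positive side
    intro y hy
    have hxy : ∀ᶠ n in atTop, x n < y := hx_lim.eventually_lt_const hy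
    have hdiv : Tendsto (fun n => x n / y) atTop (nhds 0) := by
      have := hx_lim.div_const y
      simpa using this
    have hbnd : Tendsto (fun n => (1 / 2) * ∫ ε in Ioo 0 (x n / y), g ε) atTop (nhds 0) := by
      have h0 : Tendsto (fun n => ∫ ε in Ioo 0 (x n / y), g ε) atTop (nhds 0) := by
        apply tendsto_setIntegral_zero hgint _ (fun n => measurableSet_Ioo)
        intro ε
        rcases lt_or_ge 0 ε with hε | hε
        · filter_upwards [hdiv.eventually_lt_const hε] with n hn
          intro hmem
          exact absurd hn (not_lt.2 hmem.2.le)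
        · filter_upwards with n hmem
          exact absurd hmem.1 (not_lt.2 hε)
      simpa using h0.const_mul (1 / 2 : ℝ)
    apply tendsto_of_tendsto_of_tendsto_of_le_of_le' tendsto_const_nhds hbnd
    · filter_upwards [hxy] with n hn
      unfold rdmhKernel
      rw [indicator_of_notMem (by simp only [mem_Ioi, not_lt]; linarith),
        mul_zero, add_zero]
      apply setIntegral_nonneg measurableSet_Ioi
      intro z _
      exact mul_nonneg (rdmhProposal_nonneg hg_nonneg _ _)
        (rdmhAccept_nonneg hg_nonneg hπ_pos _ _)
    · filter_upwards [hxy] with n hn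
      unfold rdmhKernel
      rw [indicator_of_notMem (by simp only [mem_Ioi, not_lt]; linarith),
        mul_zero, add_zero]
      apply key_bound hg_nonneg hπ_pos hgint (hx_pos n) measurableSet_Ioi measurableSet_Ioo
      · intro z hz
        have hz' : y < z := hz
        rw [abs_of_pos (by linarith)]
        linarith
      · intro z hz
        have hz' : y < z := hz
        constructor
        · exact div_pos (hx_pos n) (by linarith)
        · exact div_lt_div_of_pos_left (hx_pos n) hy hz'
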